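/- Let F_1,…,F_n : ℝ^d → [0,B], let θ ∈ (0,1], 1 ≤ m ≤ n, λ ≥ 0, and ν > 0, and set F̃_i(w) = F_i(w) + (λ/2)‖w‖². Define F_θ(w) = max_{π∈P_θ} ∑_{i=1}^n π_i F̃_i(w), F_{θ,S}^ν(w) = max_{π∈P_{θ,S}} ( ∑_{i∈S} π_i F̃_i(w) − ν D_S(π) ), and F̄_θ^ν(w) = E_{S∼U_m}[F_{θ,S}^ν(w)]. Then for every w ∈ ℝ^d, |F̄_θ^ν(w) − F_θ(w)| ≤ B/√(θm) + 2ν log m. -/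

import Mathlib

open scoped BigOperators

noncomputable section

set_option maxHeartbeats 2000000

namespace BiasProof
open MeasureTheory
variable {n m : ℕ}

lemma integral_ind (a t Bb : ℝ) (haB : a ≤ Bb) (htB : t ≤ Bb) :
    ∫ u in a..Bb, (if u < t then (1:ℝ) else 0) = max (t - a) 0 := by
  have h1 : (fun u : ℝ => if u < t then (1:ℝ) else 0)
      = Set.indicator (Set.Iio t) (fun _ => (1:ℝ)) := by
    funext u; simp [Set.indicator, Set.mem_Iio]
  have h2 : Set.Ioc a Bb ∩ Set.Iio t = Set.Ioo a t := by
    ext u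
    simp only [Set.mem_inter_iff, Set.mem_Ioc, Set.mem_Iio, Set.mem_Ioo]
    constructor
    · rintro ⟨⟨h3, h4⟩, h5⟩; exact ⟨h3, h5⟩
    · rintro ⟨h3, h5⟩; exact ⟨⟨h3, le_trans (le_of_lt h5) htB⟩, h5⟩
  rw [intervalIntegral.integral_of_le haB, h1,
    MeasureTheory.setIntegral_indicator measurableSet_Iio, h2,
    MeasureTheory.setIntegral_const, Real.volume_real_Ioo, smul_eq_mul, mul_one]

/-- number of indices in `S` with value `> u`, as a real -/
def Ncnt (S : Finset (Fin n)) (f : Fin n → ℝ) (u : ℝ) : ℝ :=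
  ∑ i ∈ S, (if u < f i then (1:ℝ) else 0)

lemma Ncnt_antitone (S : Finset (Fin n)) (f : Fin n → ℝ) : Antitone (Ncnt S f) := by
  intro u v huv
  apply Finset.sum_le_sum
  intro i _
  by_cases h : v < f i
  · rw [if_pos h, if_pos (lt_of_le_of_lt huv h)]
  · rw [if_neg h]
    by_cases h2 : u < f i <;> simp [h2]

lemma Ncnt_eq_card (S : Finset (Fin n)) (f : Fin n → ℝ) (u : ℝ) :
    Ncnt S f u = ((S.filter (fun i => u < f i)).card : ℝ) := by
  rw [Ncnt, Finset.sum_boole]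

lemma Ncnt_nonneg (S : Finset (Fin n)) (f : Fin n → ℝ) (u : ℝ) : 0 ≤ Ncnt S f u :=
  Finset.sum_nonneg (fun i _ => by by_cases h : u < f i <;> simp [h])

lemma min_Ncnt_antitone (S : Finset (Fin n)) (f : Fin n → ℝ) (s : ℝ) :
    Antitone (fun u => min s (Ncnt S f u)) :=
  fun u v huv => min_le_min le_rfl (Ncnt_antitone S f huv)

/-- weak duality -/
lemma weak_duality (S : Finset (Fin n)) (f : Fin n → ℝ) (B s : ℝ)
    (hf0 : ∀ i, 0 ≤ f i) (hfB : ∀ i, f i ≤ B) (hB : 0 ≤ B) (hs : 0 < s)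
    (π : Fin n → ℝ) (hπ0 : ∀ i, 0 ≤ π i) (hπsum : ∑ i ∈ S, π i = 1)
    (hπcap : ∀ i, π i ≤ 1/s) :
    ∑ i ∈ S, π i * f i ≤ (1/s) * ∫ u in (0:ℝ)..B, min s (Ncnt S f u) := by
  have hrep : ∀ i ∈ S, π i * f i = ∫ u in (0:ℝ)..B, π i * (if u < f i then (1:ℝ) else 0) := by
    intro i _
    rw [intervalIntegral.integral_const_mul, integral_ind 0 (f i) B hB (hfB i),
      sub_zero, max_eq_left (hf0 i)]
  rw [Finset.sum_congr rfl hrep, ← intervalIntegral.integral_finset_sum]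
  swap
  · intro i _
    apply Antitone.intervalIntegrable
    intro u v huv
    apply mul_le_mul_of_nonneg_left _ (hπ0 i)
    by_cases h : v < f i
    · rw [if_pos h, if_pos (lt_of_le_of_lt huv h)]
    · rw [if_neg h]; by_cases h2 : u < f i <;> simp [h2]
  rw [← intervalIntegral.integral_const_mul]
  apply intervalIntegral.integral_mono_on hB
  · apply Antitone.intervalIntegrable
    intro u v huv
    apply Finset.sum_le_sum
    intro i _
    apply mul_le_mul_of_nonneg_left _ (hπ0 i)
    by_cases h : v < f i
    · rw [if_pos h, if_pos (lt_of_le_of_lt huv h)]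
    · rw [if_neg h]; by_cases h2 : u < f i <;> simp [h2]
  · apply Antitone.intervalIntegrable
    intro u v huv
    exact mul_le_mul_of_nonneg_left (min_Ncnt_antitone S f s huv) (by positivity)
  · intro u _
    have h1 : ∑ i ∈ S, π i * (if u < f i then (1:ℝ) else 0) ≤ 1 := by
      calc ∑ i ∈ S, π i * (if u < f i then (1:ℝ) else 0) ≤ ∑ i ∈ S, π i := by
            apply Finset.sum_le_sum
            intro i _
            by_cases h : u < f i <;> simp [h, hπ0 i]
        _ = 1 := hπsum
    have h2 : ∑ i ∈ S, π i * (if u < f i then (1:ℝ) else 0) ≤ (1/s) * Ncnt S f u := by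
      rw [Ncnt, Finset.mul_sum]
      apply Finset.sum_le_sum
      intro i _
      by_cases h : u < f i
      · simpa [h] using hπcap i
      · simp [h]
    rcases le_total s (Ncnt S f u) with h | h
    · rw [min_eq_left h]
      calc ∑ i ∈ S, π i * (if u < f i then (1:ℝ) else 0) ≤ 1 := h1
        _ = (1/s) * s := by field_simp
    · rw [min_eq_right h]
      exact h2

namespace Strong

lemma integral_congr_Ioo {a b : ℝ} (hab : a ≤ b) {g h : ℝ → ℝ}
    (heq : ∀ u, a < u → u < b → g u = h u) :
    ∫ u in a..b, g u = ∫ u in a..b, h u := by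
  rw [intervalIntegral.integral_of_le hab, intervalIntegral.integral_of_le hab,
    MeasureTheory.integral_Ioc_eq_integral_Ioo, MeasureTheory.integral_Ioc_eq_integral_Ioo]
  apply MeasureTheory.setIntegral_congr_fun measurableSet_Ioo
  intro u hu
  exact heq u hu.1 hu.2

end Strong

/-- strong duality: a primal maximizer achieving the integral value -/
lemma strong_duality (S : Finset (Fin n)) (hS : S.Nonempty) (f : Fin n → ℝ) (B s : ℝ)
    (hf0 : ∀ i, 0 ≤ f i) (hfB : ∀ i, f i ≤ B) (hB : 0 ≤ B) (hs : 0 < s)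
    (hsS : s ≤ (S.card : ℝ)) :
    ∃ π : Fin n → ℝ, (∀ i, 0 ≤ π i) ∧ (∀ i ∉ S, π i = 0) ∧ (∑ i ∈ S, π i = 1) ∧
      (∀ i, π i ≤ 1/s) ∧
      (1/s) * (∫ u in (0:ℝ)..B, min s (Ncnt S f u)) ≤ ∑ i ∈ S, π i * f i := by
  classical
  -- find the threshold η
  have hη : ∃ η : ℝ, 0 ≤ η ∧ η ≤ B ∧ Ncnt S f η ≤ s
      ∧ s ≤ ((S.filter (fun i => η ≤ f i)).card : ℝ) := by
    by_cases hc0 : Ncnt S f 0 ≤ s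
    · refine ⟨0, le_refl 0, hB, hc0, ?_⟩
      rw [Finset.filter_true_of_mem (fun i _ => hf0 i)]
      exact hsS
    · set T := (S.image f).filter (fun c => Ncnt S f c ≤ s) with hTdef
      have hTne : T.Nonempty := by
        refine ⟨(S.image f).max' (hS.image f), ?_⟩
        rw [hTdef, Finset.mem_filter]
        constructor
        · exact (S.image f).max'_mem (hS.image f)
        · have hz : Ncnt S f ((S.image f).max' (hS.image f)) = 0 := by
            apply Finset.sum_eq_zero
            intro i hi
            rw [if_neg]
            exact not_lt.mpr (Finset.le_max' _ _ (Finset.mem_image_of_mem f hi))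
          rw [hz]; exact hs.le
      set η := T.min' hTne with hηdef
      have hηT : η ∈ T := T.min'_mem hTne
      rw [hTdef, Finset.mem_filter] at hηT
      obtain ⟨hηimg, hNη⟩ := hηT
      obtain ⟨iη, hiη, hfiη⟩ := Finset.mem_image.mp hηimg
      have hη0 : 0 ≤ η := hfiη ▸ hf0 iη
      have hηB : η ≤ B := hfiη ▸ hfB iη
      have hηpos : 0 < η := by
        by_contra hle
        push_neg at hle
        exact hc0 (le_trans (Ncnt_antitone S f hle) hNη)
      refine ⟨η, hη0, hηB, hNη, ?_⟩
      -- show many indices have value ≥ η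
      set P := (S.image f).filter (fun c => c < η) with hPdef
      by_cases hP : P.Nonempty
      · set u := P.max' hP with hudef
        have huP : u ∈ P := P.max'_mem hP
        rw [hPdef, Finset.mem_filter] at huP
        obtain ⟨huimg, huη⟩ := huP
        have hNu : ¬ (Ncnt S f u ≤ s) := by
          intro hcon
          have huT : u ∈ T := by
            rw [hTdef, Finset.mem_filter]; exact ⟨huimg, hcon⟩
          exact absurd (T.min'_le u huT) (not_le.mpr huη)
        have hsub : S.filter (fun i => u < f i) ⊆ S.filter (fun i => η ≤ f i) := by
          intro i hi
          rw [Finset.mem_filter] at hi ⊢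
          refine ⟨hi.1, ?_⟩
          by_contra hcon
          push_neg at hcon
          have : f i ∈ P := by
            rw [hPdef, Finset.mem_filter]
            exact ⟨Finset.mem_image_of_mem f hi.1, hcon⟩
          exact absurd (Finset.le_max' P (f i) this) (not_le.mpr hi.2)
        have h1 : Ncnt S f u ≤ ((S.filter (fun i => η ≤ f i)).card : ℝ) := by
          rw [Ncnt_eq_card]
          exact_mod_cast Nat.cast_le.mpr (Finset.card_le_card hsub)
        linarith [not_le.mp hNu]
      · -- no value below η : all of S has f i ≥ η
        have hall : S.filter (fun i => η ≤ f i) = S := by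
          apply Finset.filter_true_of_mem
          intro i hi
          by_contra hcon
          push_neg at hcon
          refine hP ⟨f i, ?_⟩
          rw [hPdef, Finset.mem_filter]
          exact ⟨Finset.mem_image_of_mem f hi, hcon⟩
        rw [hall]; exact hsS
  obtain ⟨η, hη0, hηB, hNη, hM⟩ := hη
  set A := S.filter (fun i => η < f i) with hAdef
  set E := S.filter (fun i => η ≤ f i) with hEdef
  have hAE : A ⊆ E := by
    rw [hAdef, hEdef]
    exact Finset.monotone_filter_right S (fun i _ (h : η < f i) => le_of_lt h)
  have hAS : A ⊆ S := Finset.filter_subset _ _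
  have hES : E ⊆ S := Finset.filter_subset _ _
  have hEmem : ∀ i ∈ E, η ≤ f i := by
    intro i hi; rw [hEdef] at hi; exact (Finset.mem_filter.mp hi).2
  have hAmem : ∀ i ∈ A, η < f i := by
    intro i hi; rw [hAdef] at hi; exact (Finset.mem_filter.mp hi).2
  have hnotA : ∀ i ∈ S, i ∉ A → ¬ (η < f i) := by
    intro i hi hiA hcon
    exact hiA (by rw [hAdef]; exact Finset.mem_filter.mpr ⟨hi, hcon⟩)
  have hAcard : ((A.card : ℝ)) = Ncnt S f η := (Ncnt_eq_card S f η).symm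
  have hAs : ((A.card : ℝ)) ≤ s := by rw [hAcard]; exact hNη
  have hME : s ≤ (E.card : ℝ) := hM
  have hAEcard : ((A.card : ℝ)) ≤ (E.card : ℝ) := by
    exact_mod_cast Nat.cast_le.mpr (Finset.card_le_card hAE)
  set r : ℝ := 1 - (A.card : ℝ) / s with hrdef
  have hr0 : 0 ≤ r := by
    rw [hrdef]
    have : (A.card : ℝ) / s ≤ 1 := by
      rw [div_le_one hs]; exact hAs
    linarith
  set q : ℝ := r / ((E.card : ℝ) - (A.card : ℝ)) with hqdef
  have hq0 : 0 ≤ q := div_nonneg hr0 (by linarith)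
  have hqtot : ((E.card : ℝ) - (A.card : ℝ)) * q = r := by
    by_cases hEA : ((E.card : ℝ) - (A.card : ℝ)) = 0
    · have hAeq : (A.card : ℝ) = s := le_antisymm hAs (by linarith)
      have hrz : r = 0 := by rw [hrdef, hAeq]; field_simp; ring
      rw [hEA, hrz, zero_mul]
    · rw [hqdef, mul_div_cancel₀ _ hEA]
  have hqcap : q ≤ 1/s := by
    by_cases hAeq : (A.card : ℝ) = s
    · have hrz : r = 0 := by rw [hrdef, hAeq]; field_simp; ring
      rw [hqdef, hrz, zero_div]
      positivity
    · have hlt : (A.card : ℝ) < s := lt_of_le_of_ne hAs hAeq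
      have hd0 : 0 < s - (A.card : ℝ) := by linarith
      have h1 : q ≤ r / (s - (A.card : ℝ)) := by
        rw [hqdef]
        apply div_le_div_of_nonneg_left hr0 hd0
        linarith
      have h2 : r / (s - (A.card : ℝ)) = 1/s := by
        rw [hrdef]
        field_simp
      linarith
  refine ⟨fun i => if i ∈ A then 1/s else if i ∈ E then q else 0, ?_, ?_, ?_, ?_, ?_⟩
  · intro i
    by_cases h1 : i ∈ A
    · simp only [if_pos h1]; positivity
    · by_cases h2 : i ∈ E <;> simp [h1, h2, hq0]
  · intro i hi
    simp only
    rw [if_neg (fun h => hi (hAS h)), if_neg (fun h => hi (hES h))]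
  · -- sum = 1
    rw [← Finset.sum_sdiff hAS]
    have e1 : ∑ i ∈ A, (if i ∈ A then 1/s else if i ∈ E then q else 0) = (A.card : ℝ) / s := by
      rw [Finset.sum_congr rfl (fun i hi => if_pos hi), Finset.sum_const, nsmul_eq_mul]
      ring
    have e2 : ∑ i ∈ S \ A, (if i ∈ A then 1/s else if i ∈ E then q else 0)
        = ((E.card : ℝ) - (A.card : ℝ)) * q := by
      rw [← Finset.sum_subset (Finset.sdiff_subset_sdiff hES (le_refl A))]
      · have : ∀ i ∈ E \ A, (if i ∈ A then 1/s else if i ∈ E then q else 0) = q := by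
          intro i hi
          rw [Finset.mem_sdiff] at hi
          rw [if_neg hi.2, if_pos hi.1]
        rw [Finset.sum_congr rfl this, Finset.sum_const, nsmul_eq_mul,
          Finset.card_sdiff_of_subset hAE, Nat.cast_sub (Finset.card_le_card hAE)]
      · intro i hiS hiE
        rw [Finset.mem_sdiff] at hiS
        rw [Finset.mem_sdiff] at hiE
        push_neg at hiE
        rw [if_neg hiS.2, if_neg (fun h => hiS.2 (hiE h))]
    rw [e1, e2, hqtot, hrdef]
    ring
  · intro i
    simp only
    by_cases h1 : i ∈ A
    · rw [if_pos h1]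
    · rw [if_neg h1]
      by_cases h2 : i ∈ E
      · rw [if_pos h2]; exact hqcap
      · rw [if_neg h2]; positivity
  · -- the value inequality
    have hval : ∑ i ∈ S, (if i ∈ A then 1/s else if i ∈ E then q else 0) * f i
        = (1/s) * ∑ i ∈ A, f i + r * η := by
      rw [← Finset.sum_sdiff hAS]
      have e1 : ∑ i ∈ A, (if i ∈ A then 1/s else if i ∈ E then q else 0) * f i
          = (1/s) * ∑ i ∈ A, f i := by
        rw [Finset.mul_sum]
        exact Finset.sum_congr rfl (fun i hi => by rw [if_pos hi])
      have e2 : ∑ i ∈ S \ A, (if i ∈ A then 1/s else if i ∈ E then q else 0) * f i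
          = ((E.card : ℝ) - (A.card : ℝ)) * q * η := by
        rw [← Finset.sum_subset (Finset.sdiff_subset_sdiff hES (le_refl A))]
        · have : ∀ i ∈ E \ A, (if i ∈ A then 1/s else if i ∈ E then q else 0) * f i = q * η := by
            intro i hi
            rw [Finset.mem_sdiff] at hi
            have hfi : f i = η := by
              have h1 : η ≤ f i := hEmem i hi.1
              have h2 : ¬ (η < f i) := hnotA i (hES hi.1) hi.2
              exact le_antisymm (not_lt.mp h2) h1
            rw [if_neg hi.2, if_pos hi.1, hfi]
          rw [Finset.sum_congr rfl this, Finset.sum_const, nsmul_eq_mul,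
            Finset.card_sdiff_of_subset hAE, Nat.cast_sub (Finset.card_le_card hAE)]
          ring
        · intro i hiS hiE
          rw [Finset.mem_sdiff] at hiS
          rw [Finset.mem_sdiff] at hiE
          push_neg at hiE
          rw [if_neg hiS.2, if_neg (fun h => hiS.2 (hiE h)), zero_mul]
      rw [e1, e2, hqtot]
      ring
    rw [hval]
    -- compute the integral
    have hint1 : IntervalIntegrable (fun u => min s (Ncnt S f u)) MeasureTheory.volume 0 η :=
      (min_Ncnt_antitone S f s).intervalIntegrable
    have hint2 : IntervalIntegrable (fun u => min s (Ncnt S f u)) MeasureTheory.volume η B :=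
      (min_Ncnt_antitone S f s).intervalIntegrable
    have hsplit : ∫ u in (0:ℝ)..B, min s (Ncnt S f u)
        = (∫ u in (0:ℝ)..η, min s (Ncnt S f u)) + ∫ u in η..B, min s (Ncnt S f u) :=
      (intervalIntegral.integral_add_adjacent_intervals hint1 hint2).symm
    have hpiece1 : ∫ u in (0:ℝ)..η, min s (Ncnt S f u) = s * η := by
      have hcong : ∀ u, 0 < u → u < η → min s (Ncnt S f u) = (fun _ : ℝ => s) u := by
        intro u _ huη
        simp only
        apply min_eq_left
        have h1 : (E.card : ℝ) ≤ Ncnt S f u := by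
          rw [Ncnt]
          calc (E.card : ℝ) = ∑ i ∈ E, (1:ℝ) := by rw [Finset.sum_const, nsmul_eq_mul, mul_one]
            _ = ∑ i ∈ E, (if u < f i then (1:ℝ) else 0) := by
                apply Finset.sum_congr rfl
                intro i hi
                rw [if_pos (lt_of_lt_of_le huη (hEmem i hi))]
            _ ≤ ∑ i ∈ S, (if u < f i then (1:ℝ) else 0) := by
                apply Finset.sum_le_sum_of_subset_of_nonneg hES
                intro i _ _
                by_cases h : u < f i <;> simp [h]
        linarith [hME]
      rw [Strong.integral_congr_Ioo hη0 hcong, intervalIntegral.integral_const, smul_eq_mul]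
      ring
    have hpiece2 : ∫ u in η..B, min s (Ncnt S f u) = ∑ i ∈ A, (f i - η) := by
      have hcong : Set.EqOn (fun u => min s (Ncnt S f u)) (fun u => Ncnt S f u)
          (Set.uIcc η B) := by
        intro u hu
        rw [Set.uIcc_of_le hηB] at hu
        simp only
        apply min_eq_right
        exact le_trans (Ncnt_antitone S f hu.1) hNη
      rw [intervalIntegral.integral_congr hcong]
      have : ∫ u in η..B, Ncnt S f u = ∑ i ∈ S, max (f i - η) 0 := by
        simp only [Ncnt]
        rw [intervalIntegral.integral_finset_sum]
        · apply Finset.sum_congr rfl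
          intro i _
          exact integral_ind η (f i) B hηB (hfB i)
        · intro i _
          apply Antitone.intervalIntegrable
          intro u v huv
          simp only
          by_cases h : v < f i
          · rw [if_pos h, if_pos (lt_of_le_of_lt huv h)]
          · rw [if_neg h]; by_cases h2 : u < f i <;> simp [h2]
      rw [this]
      rw [← Finset.sum_subset hAS]
      · apply Finset.sum_congr rfl
        intro i hi
        have : η < f i := hAmem i hi
        rw [max_eq_left (by linarith)]
      · intro i hiS hiA
        have : ¬ (η < f i) := hnotA i hiS hiA
        rw [max_eq_right (by linarith [not_lt.mp this])]
    rw [hsplit, hpiece1, hpiece2]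
    have hsumA : ∑ i ∈ A, (f i - η) = (∑ i ∈ A, f i) - (A.card : ℝ) * η := by
      rw [Finset.sum_sub_distrib, Finset.sum_const, nsmul_eq_mul]
    rw [hsumA, hrdef]
    have hs' : s ≠ 0 := ne_of_gt hs
    apply le_of_eq
    field_simp
    ring



abbrev SS (n m : ℕ) : Finset (Finset (Fin n)) :=
  Finset.univ.filter (fun S : Finset (Fin n) => S.card = m)

lemma SS_card (n m : ℕ) : (SS n m).card = n.choose m := by
  have : SS n m = Finset.powersetCard m (Finset.univ : Finset (Fin n)) := by
    rw [Finset.powersetCard_eq_filter, Finset.powerset_univ]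
  rw [this, Finset.card_powersetCard, Finset.card_univ, Fintype.card_fin]

lemma count_contain (hmn : m ≤ n) (A : Finset (Fin n)) (hA : A.card ≤ m) :
    ((SS n m).filter (fun S => A ⊆ S)).card = (n - A.card).choose (m - A.card) := by
  have key : ((SS n m).filter (fun S => A ⊆ S)).card
      = (Finset.powersetCard (m - A.card) (Finset.univ \ A)).card := by
    apply Finset.card_bij' (fun S _ => S \ A) (fun T _ => T ∪ A)
    · intro S hS
      simp only [SS, Finset.mem_filter, Finset.mem_univ, true_and] at hS
      obtain ⟨hcard, hsub⟩ := hS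
      rw [Finset.mem_powersetCard]
      exact ⟨Finset.sdiff_subset_sdiff (Finset.subset_univ S) le_rfl,
        by rw [Finset.card_sdiff_of_subset hsub, hcard]⟩
    · intro T hT
      rw [Finset.mem_powersetCard] at hT
      obtain ⟨hsub, hcard⟩ := hT
      have hdisj : Disjoint T A := by
        refine Finset.disjoint_left.mpr fun a haT haA => ?_
        have := hsub haT
        simp only [Finset.mem_sdiff] at this
        exact this.2 haA
      simp only [SS, Finset.mem_filter, Finset.mem_univ, true_and]
      constructor
      · rw [Finset.card_union_of_disjoint hdisj, hcard]
        omega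
      · exact Finset.subset_union_right
    · intro S hS
      simp only [SS, Finset.mem_filter, Finset.mem_univ, true_and] at hS
      exact Finset.sdiff_union_of_subset hS.2
    · intro T hT
      rw [Finset.mem_powersetCard] at hT
      have hdisj : Disjoint T A := by
        refine Finset.disjoint_left.mpr fun a haT haA => ?_
        have := hT.1 haT
        simp only [Finset.mem_sdiff] at this
        exact this.2 haA
      exact Finset.union_sdiff_cancel_right hdisj
  rw [key, Finset.card_powersetCard, Finset.card_sdiff_of_subset (Finset.subset_univ A),
    Finset.card_univ, Fintype.card_fin]

lemma count_mem (hmn : m ≤ n) (hm : 1 ≤ m) (i : Fin n) :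
    ((SS n m).filter (fun S => i ∈ S)).card = (n - 1).choose (m - 1) := by
  have : ((SS n m).filter (fun S => i ∈ S)) = ((SS n m).filter (fun S => {i} ⊆ S)) := by
    apply Finset.filter_congr; intro S _; simp
  rw [this, count_contain hmn ({i} : Finset (Fin n)) (by simpa using hm), Finset.card_singleton]

lemma count_mem_pair (hmn : m ≤ n) (hm : 2 ≤ m) (i j : Fin n) (hij : i ≠ j) :
    ((SS n m).filter (fun S => i ∈ S ∧ j ∈ S)).card = (n - 2).choose (m - 2) := by
  have heq : ((SS n m).filter (fun S => i ∈ S ∧ j ∈ S))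
      = ((SS n m).filter (fun S => ({i, j} : Finset (Fin n)) ⊆ S)) := by
    apply Finset.filter_congr; intro S _
    simp [Finset.insert_subset_iff]
  have hij' : i ∉ ({j} : Finset (Fin n)) := by simpa using hij
  have hcard2 : ({i, j} : Finset (Fin n)).card = 2 := by
    rw [Finset.card_insert_of_notMem hij', Finset.card_singleton]
  rw [heq, count_contain hmn _ (by rw [hcard2]; exact hm), hcard2]

/-- first moment -/
lemma sum_first (hmn : m ≤ n) (hm : 1 ≤ m) (χ : Fin n → ℝ) :
    ∑ S ∈ SS n m, ∑ i ∈ S, χ i = ((n - 1).choose (m - 1) : ℝ) * ∑ i, χ i := by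
  have h1 : ∀ S ∈ SS n m, ∑ i ∈ S, χ i = ∑ i, (if i ∈ S then χ i else 0) := by
    intro S _
    rw [Finset.sum_ite_mem, Finset.univ_inter]
  rw [Finset.sum_congr rfl h1, Finset.sum_comm, Finset.mul_sum]
  apply Finset.sum_congr rfl
  intro i _
  rw [← Finset.sum_filter, Finset.sum_const, count_mem hmn hm i, nsmul_eq_mul]

/-- second moment -/
lemma sum_second (hmn : m ≤ n) (hm : 2 ≤ m) (χ : Fin n → ℝ) (hχ : ∀ i, χ i = 0 ∨ χ i = 1) :
    ∑ S ∈ SS n m, (∑ i ∈ S, χ i)^2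
      = ((n - 2).choose (m - 2) : ℝ) * (∑ i, χ i)^2
        + (((n - 1).choose (m - 1) : ℝ) - ((n - 2).choose (m - 2) : ℝ)) * ∑ i, χ i := by
  set C1 : ℝ := ((n - 1).choose (m - 1) : ℝ) with hC1
  set C2 : ℝ := ((n - 2).choose (m - 2) : ℝ) with hC2
  set K : ℝ := ∑ i, χ i with hK
  have hsq : ∀ i, χ i * χ i = χ i := by
    intro i; rcases hχ i with h | h <;> rw [h] <;> ring
  have h1 : ∀ S ∈ SS n m, (∑ i ∈ S, χ i)^2
      = ∑ i, ∑ j, (if i ∈ S ∧ j ∈ S then χ i * χ j else 0) := by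
    intro S _
    have : ∑ i ∈ S, χ i = ∑ i, (if i ∈ S then χ i else 0) := by
      rw [Finset.sum_ite_mem, Finset.univ_inter]
    rw [this, sq, Finset.sum_mul_sum]
    apply Finset.sum_congr rfl; intro i _
    apply Finset.sum_congr rfl; intro j _
    by_cases hi : i ∈ S <;> by_cases hj : j ∈ S <;> simp [hi, hj]
  rw [Finset.sum_congr rfl h1, Finset.sum_comm]
  have h2 : ∀ i ∈ (Finset.univ : Finset (Fin n)),
      ∑ S ∈ SS n m, ∑ j, (if i ∈ S ∧ j ∈ S then χ i * χ j else 0)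
      = ∑ j, ∑ S ∈ SS n m, (if i ∈ S ∧ j ∈ S then χ i * χ j else 0) := by
    intro i _; exact Finset.sum_comm
  rw [Finset.sum_congr rfl h2]
  have hsplit : ∀ i j : Fin n, ∑ S ∈ SS n m, (if i ∈ S ∧ j ∈ S then χ i * χ j else 0)
      = (if i = j then C1 else C2) * (χ i * χ j) := by
    intro i j
    rw [← Finset.sum_filter, Finset.sum_const, nsmul_eq_mul]
    congr 1
    by_cases hij : i = j
    · subst hij
      have : (SS n m).filter (fun S => i ∈ S ∧ i ∈ S) = (SS n m).filter (fun S => i ∈ S) := by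
        apply Finset.filter_congr; intro S _; simp
      rw [if_pos rfl, this, count_mem hmn (le_trans (by norm_num) hm) i]
    · rw [if_neg hij, count_mem_pair hmn hm i j hij]
  have h5 : ∀ i ∈ (Finset.univ : Finset (Fin n)),
      ∑ j, (if i = j then C1 else C2) * (χ i * χ j) = C2 * χ i * K + (C1 - C2) * χ i := by
    intro i _
    have : ∀ j ∈ (Finset.univ : Finset (Fin n)),
        (if i = j then C1 else C2) * (χ i * χ j)
        = C2 * (χ i * χ j) + (if i = j then (C1 - C2) * (χ i * χ j) else 0) := by
      intro j _
      by_cases hij : i = j <;> simp [hij] <;> ring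
    rw [Finset.sum_congr rfl this, Finset.sum_add_distrib]
    congr 1
    · rw [← Finset.mul_sum, ← Finset.mul_sum, hK]; ring
    · rw [Finset.sum_ite_eq]
      simp [hsq i]
  calc ∑ i, ∑ j, ∑ S ∈ SS n m, (if i ∈ S ∧ j ∈ S then χ i * χ j else 0)
      = ∑ i, ∑ j, (if i = j then C1 else C2) * (χ i * χ j) := by
        apply Finset.sum_congr rfl; intro i _
        apply Finset.sum_congr rfl; intro j _
        exact hsplit i j
    _ = ∑ i, (C2 * χ i * K + (C1 - C2) * χ i) := Finset.sum_congr rfl h5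
    _ = C2 * K^2 + (C1 - C2) * K := by
        rw [Finset.sum_add_distrib, ← Finset.mul_sum]
        have : ∑ i, C2 * χ i * K = C2 * K * K := by
          rw [← Finset.sum_mul, ← Finset.mul_sum]
        rw [this]; ring

lemma max_half (x : ℝ) : max x 0 = (x + |x|) / 2 := by
  rcases le_total 0 x with h | h
  · rw [max_eq_left h, abs_of_nonneg h]; ring
  · rw [max_eq_right h, abs_of_nonpos h]; ring

lemma min_sub_max (s x : ℝ) : min s x = x - max (x - s) 0 := by
  rcases le_total x s with h | h
  · rw [min_eq_right h, max_eq_right (by linarith)]; ring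
  · rw [min_eq_left h, max_eq_left (by linarith)]; ring

lemma conc (hm : 2 ≤ m) (hmn : m ≤ n) (s : ℝ) (hs1 : 1 ≤ s)
    (χ : Fin n → ℝ) (hχ : ∀ i, χ i = 0 ∨ χ i = 1) :
    (n.choose m : ℝ) * (min s ((m : ℝ) / (n : ℝ) * ∑ i, χ i) - Real.sqrt s)
      ≤ ∑ S ∈ SS n m, min s (∑ i ∈ S, χ i) := by
  have hn2 : 2 ≤ n := le_trans hm hmn
  have hn0 : (0:ℝ) < n := by positivity
  have hnn0 : (0:ℝ) < (n:ℝ) - 1 := by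
    have : (2:ℝ) ≤ n := by exact_mod_cast hn2
    linarith
  set Cr : ℝ := (n.choose m : ℝ) with hCrdef
  have hCr : 0 < Cr := by
    rw [hCrdef]
    exact_mod_cast Nat.choose_pos hmn
  set K : ℝ := ∑ i, χ i with hKdef
  have hχ0 : ∀ i, 0 ≤ χ i := by intro i; rcases hχ i with h | h <;> rw [h] <;> norm_num
  have hχ1 : ∀ i, χ i ≤ 1 := by intro i; rcases hχ i with h | h <;> rw [h] <;> norm_num
  have hK0 : 0 ≤ K := Finset.sum_nonneg (fun i _ => hχ0 i)
  have hKn : K ≤ n := by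
    calc K ≤ ∑ _i : Fin n, (1:ℝ) := Finset.sum_le_sum (fun i _ => hχ1 i)
    _ = n := by simp
  have hKalt : K = 0 ∨ 1 ≤ K := by
    by_cases h : ∀ i, χ i = 0
    · left; rw [hKdef]; exact Finset.sum_eq_zero (fun i _ => h i)
    · right
      push_neg at h
      obtain ⟨i, hi⟩ := h
      have h1 : χ i = 1 := (hχ i).resolve_left hi
      calc (1:ℝ) = χ i := h1.symm
        _ ≤ K := Finset.single_le_sum (fun j _ => hχ0 j) (Finset.mem_univ i)
  set a : ℝ := (m : ℝ) / (n : ℝ) * K with hadef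
  have ha0 : 0 ≤ a := by positivity
  set C1 : ℝ := ((n - 1).choose (m - 1) : ℝ) with hC1def
  set C2 : ℝ := ((n - 2).choose (m - 2) : ℝ) with hC2def
  -- choose identities
  have nat_id1 : n * (n-1).choose (m-1) = n.choose m * m := by
    have h := Nat.add_one_mul_choose_eq (n-1) (m-1)
    rwa [show (n-1)+1 = n from by omega, show (m-1)+1 = m from by omega] at h
  have nat_id2 : (n-1) * (n-2).choose (m-2) = (n-1).choose (m-1) * (m-1) := by
    have h := Nat.add_one_mul_choose_eq (n-2) (m-2)
    rwa [show (n-2)+1 = n-1 by omega, show (m-2)+1 = m-1 by omega] at h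
  have hid1 : (n : ℝ) * C1 = (m : ℝ) * Cr := by
    rw [hC1def, hCrdef]
    have : ((n : ℝ)) * ((n-1).choose (m-1) : ℝ) = ((n * (n-1).choose (m-1) : ℕ) : ℝ) := by
      push_cast; ring
    rw [this, nat_id1]
    push_cast; ring
  have hid2 : ((n : ℝ) - 1) * C2 = ((m : ℝ) - 1) * C1 := by
    have h : (((n-1) * (n-2).choose (m-2) : ℕ) : ℝ) = (((n-1).choose (m-1) * (m-1) : ℕ) : ℝ) := by
      exact_mod_cast congrArg (fun x : ℕ => (x : ℝ)) nat_id2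
    push_cast at h
    rw [hC2def, hC1def]
    have c1 : ((n-1 : ℕ) : ℝ) = (n : ℝ) - 1 := by
      have h1 : (1:ℕ) ≤ n := by omega
      push_cast [h1]; ring
    have c2 : ((m-1 : ℕ) : ℝ) = (m : ℝ) - 1 := by
      have h1 : (1:ℕ) ≤ m := by omega
      push_cast [h1]; ring
    rw [c1, c2] at h
    linarith [h]
  have hC1K : C1 * K = Cr * a := by
    have hC1eq : C1 = (m:ℝ) * Cr / (n:ℝ) := by
      field_simp
      linarith [hid1]
    rw [hC1eq, hadef]
    ring
  have hEX : ∑ S ∈ SS n m, ∑ i ∈ S, χ i = Cr * a := by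
    rw [sum_first hmn (by omega) χ, ← hKdef, ← hC1def]
    exact hC1K
  have hEX2 : ∑ S ∈ SS n m, (∑ i ∈ S, χ i)^2 ≤ Cr * (a^2 + a) := by
    rw [sum_second hmn hm χ hχ, ← hKdef, ← hC1def, ← hC2def]
    have key : C2 * (K^2 - K) ≤ Cr * a^2 := by
      rcases hKalt with h0 | h1
      · have hz : C2 * (K^2 - K) = 0 := by rw [h0]; ring
        rw [hz]
        positivity
      · have hm2 : (2:ℝ) ≤ m := by exact_mod_cast hm
        have hmn' : (m:ℝ) ≤ n := by exact_mod_cast hmn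
        have hC2nn : 0 ≤ C2 := by rw [hC2def]; positivity
        have hprod : ((n:ℝ) - 1) * (n:ℝ) * C2 = ((m:ℝ) - 1) * (m:ℝ) * Cr := by
          nlinarith [hid1, hid2]
        have ha2 : Cr * a^2 = Cr * ((m:ℝ)^2 * K^2) / (n:ℝ)^2 := by
          rw [hadef]; ring
        rw [ha2, le_div_iff₀ (by positivity : (0:ℝ) < (n:ℝ)^2)]
        -- goal : C2 * (K^2 - K) * n^2 ≤ Cr * (m^2 * K^2)
        have hbr : 0 ≤ ((n:ℝ)-1)*m*K - ((m:ℝ)-1)*(K-1)*n := by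
          nlinarith [mul_nonneg hK0 (by linarith : (0:ℝ) ≤ (n:ℝ) - m),
            mul_nonneg (by linarith : (0:ℝ) ≤ (m:ℝ) - 1) hn0.le]
        have h10 : ((n:ℝ)-1)*(n:ℝ)*(C2*(K^2-K)*(n:ℝ)^2)
            = ((m:ℝ)-1)*(m:ℝ)*Cr*((K^2-K)*(n:ℝ)^2) := by
          linear_combination ((K^2-K)*(n:ℝ)^2) * hprod
        have hdiff : ((n:ℝ)-1)*(n:ℝ)*(Cr*((m:ℝ)^2*K^2)) - ((m:ℝ)-1)*(m:ℝ)*Cr*((K^2-K)*(n:ℝ)^2)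
            = Cr*(m:ℝ)*(n:ℝ)*K*(((n:ℝ)-1)*(m:ℝ)*K - ((m:ℝ)-1)*(K-1)*(n:ℝ)) := by
          ring
        have hfac : 0 ≤ Cr*(m:ℝ)*(n:ℝ)*K*(((n:ℝ)-1)*(m:ℝ)*K - ((m:ℝ)-1)*(K-1)*(n:ℝ)) := by
          apply mul_nonneg _ hbr
          positivity
        have h11 : ((n:ℝ)-1)*(n:ℝ)*(C2*(K^2-K)*(n:ℝ)^2)
            ≤ ((n:ℝ)-1)*(n:ℝ)*(Cr*((m:ℝ)^2*K^2)) := by linarith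
        have hpos : (0:ℝ) < ((n:ℝ)-1)*(n:ℝ) := by positivity
        exact le_of_mul_le_mul_left (by linarith [h11]) hpos
    linarith [hC1K, key]
  -- Cauchy-Schwarz helper
  have hCS : ∀ t : ℝ, ∑ S ∈ SS n m, |(∑ i ∈ S, χ i) - t|
      ≤ Cr * Real.sqrt ((a - t)^2 + a) := by
    intro t
    have h1 : (∑ S ∈ SS n m, |(∑ i ∈ S, χ i) - t|)^2
        ≤ Cr * ∑ S ∈ SS n m, ((∑ i ∈ S, χ i) - t)^2 := by
      have := Finset.sum_mul_sq_le_sq_mul_sq (SS n m) (fun _ => (1:ℝ))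
        (fun S => |(∑ i ∈ S, χ i) - t|)
      simp only [one_mul, one_pow, sq_abs] at this
      calc (∑ S ∈ SS n m, |(∑ i ∈ S, χ i) - t|)^2
          ≤ (∑ _S ∈ SS n m, (1:ℝ)) * ∑ S ∈ SS n m, ((∑ i ∈ S, χ i) - t)^2 := this
        _ = Cr * ∑ S ∈ SS n m, ((∑ i ∈ S, χ i) - t)^2 := by
            rw [Finset.sum_const, nsmul_eq_mul, mul_one, SS_card]
    have h2 : ∑ S ∈ SS n m, ((∑ i ∈ S, χ i) - t)^2 ≤ Cr * ((a - t)^2 + a) := by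
      have expand : ∀ S ∈ SS n m, ((∑ i ∈ S, χ i) - t)^2
          = (∑ i ∈ S, χ i)^2 - 2*t*(∑ i ∈ S, χ i) + t^2 := by
        intro S _; ring
      rw [Finset.sum_congr rfl expand]
      rw [Finset.sum_add_distrib, Finset.sum_sub_distrib, ← Finset.mul_sum, hEX,
        Finset.sum_const, nsmul_eq_mul, SS_card, ← hCrdef]
      nlinarith [hEX2]
    have h3 : (∑ S ∈ SS n m, |(∑ i ∈ S, χ i) - t|)^2 ≤ (Cr * Real.sqrt ((a-t)^2 + a))^2 := by
      calc (∑ S ∈ SS n m, |(∑ i ∈ S, χ i) - t|)^2 ≤ Cr * (Cr * ((a-t)^2 + a)) := by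
            nlinarith [h1, h2, hCr]
        _ = (Cr * Real.sqrt ((a-t)^2 + a))^2 := by
            rw [mul_pow, Real.sq_sqrt (by positivity)]; ring
    have habs : 0 ≤ ∑ S ∈ SS n m, |(∑ i ∈ S, χ i) - t| :=
      Finset.sum_nonneg (fun S _ => abs_nonneg _)
    nlinarith [h3, habs, mul_nonneg hCr.le (Real.sqrt_nonneg ((a-t)^2+a))]
  -- rewrite goal
  have hsqrt_s : (1:ℝ) ≤ Real.sqrt s := by
    rw [show (1:ℝ) = Real.sqrt 1 by rw [Real.sqrt_one]]
    exact Real.sqrt_le_sqrt hs1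
  have hgoal : ∑ S ∈ SS n m, min s (∑ i ∈ S, χ i)
      = Cr * a - ∑ S ∈ SS n m, max ((∑ i ∈ S, χ i) - s) 0 := by
    rw [Finset.sum_congr rfl (fun S _ => min_sub_max s (∑ i ∈ S, χ i)),
      Finset.sum_sub_distrib, hEX]
  rw [hgoal]
  have hmin_a : min s a = a - max (a - s) 0 := min_sub_max s a
  have key : ∑ S ∈ SS n m, max ((∑ i ∈ S, χ i) - s) 0
      ≤ Cr * max (a - s) 0 + Cr * Real.sqrt s := by
    rcases le_total a (2*s) with hcase | hcase
    · -- a ≤ 2s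
      have step1 : ∑ S ∈ SS n m, max ((∑ i ∈ S, χ i) - s) 0
          ≤ ∑ S ∈ SS n m, (max ((∑ i ∈ S, χ i) - a) 0 + max (a - s) 0) := by
        apply Finset.sum_le_sum
        intro S _
        apply max_le
        · have h1 : (∑ i ∈ S, χ i) - s = ((∑ i ∈ S, χ i) - a) + (a - s) := by ring
          rw [h1]
          exact add_le_add (le_max_left _ _) (le_max_left _ _)
        · positivity
      have step2 : ∑ S ∈ SS n m, max ((∑ i ∈ S, χ i) - a) 0 ≤ Cr * Real.sqrt s := by
        have he : ∑ S ∈ SS n m, max ((∑ i ∈ S, χ i) - a) 0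
            = (∑ S ∈ SS n m, ((∑ i ∈ S, χ i) - a) + ∑ S ∈ SS n m, |(∑ i ∈ S, χ i) - a|) / 2 := by
          rw [Finset.sum_congr rfl (fun S _ => max_half ((∑ i ∈ S, χ i) - a)), ← Finset.sum_div,
            Finset.sum_add_distrib]
        have hzero : ∑ S ∈ SS n m, ((∑ i ∈ S, χ i) - a) = 0 := by
          rw [Finset.sum_sub_distrib, hEX, Finset.sum_const, nsmul_eq_mul, SS_card, ← hCrdef]
          ring
        rw [he, hzero, zero_add]
        have h5 := hCS a
        have h4 : Real.sqrt ((a-a)^2 + a) ≤ 2 * Real.sqrt s := by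
          have e1 : (a-a)^2 + a = a := by ring
          rw [e1]
          calc Real.sqrt a ≤ Real.sqrt (4*s) := Real.sqrt_le_sqrt (by linarith)
            _ = 2 * Real.sqrt s := by
                rw [show (4:ℝ)*s = 2^2*s by ring, Real.sqrt_mul (by positivity),
                  Real.sqrt_sq (by norm_num)]
        have h6 : Cr * Real.sqrt ((a-a)^2 + a) ≤ Cr * (2 * Real.sqrt s) :=
          mul_le_mul_of_nonneg_left h4 hCr.le
        linarith [h5, h6]
      calc ∑ S ∈ SS n m, max ((∑ i ∈ S, χ i) - s) 0
          ≤ ∑ S ∈ SS n m, (max ((∑ i ∈ S, χ i) - a) 0 + max (a - s) 0) := step1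
        _ = ∑ S ∈ SS n m, max ((∑ i ∈ S, χ i) - a) 0 + Cr * max (a - s) 0 := by
            rw [Finset.sum_add_distrib, Finset.sum_const, nsmul_eq_mul, SS_card, ← hCrdef]
        _ ≤ Cr * Real.sqrt s + Cr * max (a - s) 0 := by linarith [step2]
        _ = Cr * max (a - s) 0 + Cr * Real.sqrt s := by ring
    · -- 2s ≤ a
      set d : ℝ := a - s with hddef
      have hd : s ≤ d := by rw [hddef]; linarith
      have hd0 : 0 < d := by linarith
      have he : ∑ S ∈ SS n m, max ((∑ i ∈ S, χ i) - s) 0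
          = (∑ S ∈ SS n m, ((∑ i ∈ S, χ i) - s) + ∑ S ∈ SS n m, |(∑ i ∈ S, χ i) - s|) / 2 := by
        rw [Finset.sum_congr rfl (fun S _ => max_half ((∑ i ∈ S, χ i) - s)), ← Finset.sum_div,
          Finset.sum_add_distrib]
      have hsum : ∑ S ∈ SS n m, ((∑ i ∈ S, χ i) - s) = Cr * d := by
        rw [Finset.sum_sub_distrib, hEX, Finset.sum_const, nsmul_eq_mul, SS_card, ← hCrdef, hddef]
        ring
      have habs : ∑ S ∈ SS n m, |(∑ i ∈ S, χ i) - s| ≤ Cr * (d + 2 * Real.sqrt s) := by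
        have h1 := hCS s
        have h2 : Real.sqrt ((a - s)^2 + a) ≤ d + 2 * Real.sqrt s := by
          have hsq : (a - s)^2 + a ≤ (d + 2 * Real.sqrt s)^2 := by
            have e1 : (d + 2 * Real.sqrt s)^2 = d^2 + 4*d*Real.sqrt s + 4 * (Real.sqrt s)^2 := by
              ring
            rw [e1, Real.sq_sqrt (by linarith : (0:ℝ) ≤ s), hddef]
            -- need a ≤ 4*d*√s + 4s - ... : (a-s)^2 + a ≤ (a-s)^2 + 4(a-s)√s + 4s
            nlinarith [hsqrt_s, hd, hs1]
          calc Real.sqrt ((a - s)^2 + a) ≤ Real.sqrt ((d + 2*Real.sqrt s)^2) :=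
              Real.sqrt_le_sqrt hsq
            _ = d + 2 * Real.sqrt s := Real.sqrt_sq (by positivity)
        calc ∑ S ∈ SS n m, |(∑ i ∈ S, χ i) - s| ≤ Cr * Real.sqrt ((a - s)^2 + a) := h1
          _ ≤ Cr * (d + 2 * Real.sqrt s) := by nlinarith [hCr, h2]
      have hmax : max (a - s) 0 = d := by rw [max_eq_left (by linarith), hddef]
      rw [he, hsum, hmax]
      nlinarith [habs]
  rw [hmin_a]
  have expand : Cr * ((a - (a - s) ⊔ 0) - Real.sqrt s)
      = Cr * a - (Cr * ((a - s) ⊔ 0) + Cr * Real.sqrt s) := by ring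
  rw [expand]
  linarith [key]


lemma log_ge (t : ℝ) (ht : 0 < t) : 1 - 1/t ≤ Real.log t := by
  have h := Real.log_le_sub_one_of_pos (show (0:ℝ) < 1/t by positivity)
  rw [Real.log_div one_ne_zero (ne_of_gt ht), Real.log_one] at h
  linarith

lemma entropy_nonneg (m : ℕ) (hm : 1 ≤ m) (S : Finset (Fin n)) (hS : S.card = m)
    (π : Fin n → ℝ) (hπ0 : ∀ i, 0 ≤ π i) (hπsum : ∑ i ∈ S, π i = 1) :
    0 ≤ ∑ i ∈ S, π i * Real.log (π i * m) := by
  have hm0 : (0:ℝ) < m := by positivity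
  have key : ∀ i ∈ S, π i - 1/m ≤ π i * Real.log (π i * m) := by
    intro i _
    by_cases h : π i = 0
    · rw [h]
      have : (0:ℝ) ≤ 1/(m:ℝ) := by positivity
      simp only [zero_mul, zero_sub, neg_le, zero_mul]
      linarith
    · have hp : 0 < π i := lt_of_le_of_ne (hπ0 i) (Ne.symm h)
      have ht : 0 < π i * m := by positivity
      have hlog := log_ge (π i * m) ht
      have : π i * (1 - 1/(π i * m)) ≤ π i * Real.log (π i * m) :=
        mul_le_mul_of_nonneg_left hlog hp.le
      have heq : π i * (1 - 1/(π i * m)) = π i - 1/m := by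
        field_simp
      linarith [heq ▸ this]
  calc (0:ℝ) = ∑ i ∈ S, (π i - 1/m) := by
        rw [Finset.sum_sub_distrib, hπsum, Finset.sum_const, hS, nsmul_eq_mul]
        field_simp; ring
    _ ≤ ∑ i ∈ S, π i * Real.log (π i * m) := Finset.sum_le_sum key

lemma entropy_le_log (m : ℕ) (hm : 1 ≤ m) (S : Finset (Fin n))
    (π : Fin n → ℝ) (hπ0 : ∀ i, 0 ≤ π i) (hπ1 : ∀ i, π i ≤ 1) (hπsum : ∑ i ∈ S, π i = 1) :
    ∑ i ∈ S, π i * Real.log (π i * m) ≤ Real.log m := by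
  have hm0 : (0:ℝ) < m := by positivity
  have key : ∀ i ∈ S, π i * Real.log (π i * m) ≤ π i * Real.log m := by
    intro i _
    by_cases h : π i = 0
    · rw [h]; simp
    · have hp : 0 < π i := lt_of_le_of_ne (hπ0 i) (Ne.symm h)
      apply mul_le_mul_of_nonneg_left _ hp.le
      apply Real.log_le_log (by positivity)
      nlinarith [hπ1 i]
  calc ∑ i ∈ S, π i * Real.log (π i * m) ≤ ∑ i ∈ S, π i * Real.log m :=
      Finset.sum_le_sum key
    _ = Real.log m := by rw [← Finset.sum_mul, hπsum, one_mul]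


lemma choose_id1 {n m : ℕ} (hm : 1 ≤ m) (hmn : m ≤ n) :
    ((n-1).choose (m-1) : ℝ) * (n:ℝ) = (m:ℝ) * (n.choose m : ℝ) := by
  have h := Nat.add_one_mul_choose_eq (n-1) (m-1)
  rw [show (n-1)+1 = n from by omega, show (m-1)+1 = m from by omega] at h
  have h' : ((n * (n-1).choose (m-1) : ℕ) : ℝ) = ((n.choose m * m : ℕ) : ℝ) := by
    exact_mod_cast congrArg (fun x : ℕ => (x : ℝ)) h
  push_cast at h'
  linarith

lemma mul_min (a x y : ℝ) (ha : 0 ≤ a) : a * min x y = min (a*x) (a*y) := by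
  rcases le_total x y with h | h
  · rw [min_eq_left h, min_eq_left (mul_le_mul_of_nonneg_left h ha)]
  · rw [min_eq_right h, min_eq_right (mul_le_mul_of_nonneg_left h ha)]

end BiasProof

open BiasProof in
/-- Bias bound for the smoothed minibatch superquantile: with `F̃_i = F_i + (λ/2)‖·‖²`,
`F_θ(w) = max_{π ∈ P_θ} ∑ π i F̃ i w`, and
`F̄_θ^ν(w) = E_{S ∼ U_m}[max_{π ∈ P_{θ,S}} (∑_{i∈S} π i F̃ i w − ν D_S(π))]`
(the expectation being the average over all subsets of size `m`),
one has `|F̄_θ^ν(w) − F_θ(w)| ≤ B/√(θm) + 2ν log m`. -/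
theorem bias_of_minibatch_smoothed_superquantile
    (d n m : ℕ) (hn : 0 < n) (hm : 0 < m) (hmn : m ≤ n)
    (θ lam ν B : ℝ) (hθ : θ ∈ Set.Ioc (0:ℝ) 1) (hlam : 0 ≤ lam) (hν : 0 < ν) (hB : 0 ≤ B)
    (F : Fin n → EuclideanSpace ℝ (Fin d) → ℝ)
    (hFB : ∀ i v, F i v ∈ Set.Icc (0:ℝ) B)
    (w : EuclideanSpace ℝ (Fin d)) :
    |(∑ S ∈ Finset.univ.filter (fun S : Finset (Fin n) => S.card = m),
        sSup {x : ℝ | ∃ π : Fin n → ℝ, (∀ i, 0 ≤ π i) ∧ (∀ i ∉ S, π i = 0) ∧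
          (∑ i ∈ S, π i = 1) ∧ (∀ i, π i ≤ 1 / (θ * m)) ∧
          x = (∑ i ∈ S, π i * (F i w + lam / 2 * ‖w‖ ^ 2))
            - ν * ∑ i ∈ S, π i * Real.log (π i * m)})
        / (n.choose m : ℝ)
      - sSup {x : ℝ | ∃ π : Fin n → ℝ, (∀ i, 0 ≤ π i) ∧ (∑ i, π i = 1) ∧
          (∀ i, π i ≤ 1 / (θ * n)) ∧ x = ∑ i, π i * (F i w + lam / 2 * ‖w‖ ^ 2)}|
      ≤ B / Real.sqrt (θ * m) + 2 * ν * Real.log m := by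
  classical
  obtain ⟨hθ0, hθ1⟩ := hθ
  have hm1 : (1:ℝ) ≤ (m:ℝ) := by exact_mod_cast hm
  have hn1 : (1:ℝ) ≤ (n:ℝ) := by exact_mod_cast hn
  have hm0' : (0:ℝ) < (m:ℝ) := by linarith
  have hn0' : (0:ℝ) < (n:ℝ) := by linarith
  have hmn' : (m:ℝ) ≤ (n:ℝ) := by exact_mod_cast hmn
  have hs0 : 0 < θ * (m:ℝ) := by positivity
  have hsN0 : 0 < θ * (n:ℝ) := by positivity
  have hlogm : 0 ≤ Real.log m := Real.log_nonneg hm1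
  have hsqrt0 : 0 < Real.sqrt (θ * (m:ℝ)) := Real.sqrt_pos.mpr hs0
  have hC0 : (0:ℝ) < (n.choose m : ℝ) := by exact_mod_cast Nat.choose_pos hmn
  set c := lam / 2 * ‖w‖ ^ 2 with hcdef
  have hc0 : 0 ≤ c := by rw [hcdef]; positivity
  set fw : Fin n → ℝ := fun i => F i w with hfwdef
  have hf0 : ∀ i, 0 ≤ fw i := fun i => (hFB i w).1
  have hfB : ∀ i, fw i ≤ B := fun i => (hFB i w).2
  -- names for the two kinds of feasible sets
  set QS : Finset (Fin n) → Set ℝ := fun S => {x : ℝ | ∃ π : Fin n → ℝ, (∀ i, 0 ≤ π i) ∧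
      (∀ i ∉ S, π i = 0) ∧ (∑ i ∈ S, π i = 1) ∧ (∀ i, π i ≤ 1 / (θ * m)) ∧
      x = (∑ i ∈ S, π i * (fw i + c)) - ν * ∑ i ∈ S, π i * Real.log (π i * m)} with hQSdef
  set PF : Set ℝ := {x : ℝ | ∃ π : Fin n → ℝ, (∀ i, 0 ≤ π i) ∧ (∑ i, π i = 1) ∧
      (∀ i, π i ≤ 1 / (θ * n)) ∧ x = ∑ i, π i * (fw i + c)} with hPFdef
  show |(∑ S ∈ Finset.univ.filter (fun S : Finset (Fin n) => S.card = m), sSup (QS S))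
      / (n.choose m : ℝ) - sSup PF| ≤ B / Real.sqrt (θ * m) + 2 * ν * Real.log m
  -- objective split
  have hobj : ∀ (S : Finset (Fin n)) (π : Fin n → ℝ), (∑ i ∈ S, π i = 1) →
      ∑ i ∈ S, π i * (fw i + c) = (∑ i ∈ S, π i * fw i) + c := by
    intro S π h
    have h1 : ∀ i ∈ S, π i * (fw i + c) = π i * fw i + π i * c := fun i _ => mul_add _ _ _
    rw [Finset.sum_congr rfl h1, Finset.sum_add_distrib, ← Finset.sum_mul, h, one_mul]
  have hval_ub : ∀ (S : Finset (Fin n)) (π : Fin n → ℝ), (∀ i, 0 ≤ π i) →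
      (∑ i ∈ S, π i = 1) → (∑ i ∈ S, π i * fw i) ≤ B := by
    intro S π hπ0 hπsum
    calc ∑ i ∈ S, π i * fw i ≤ ∑ i ∈ S, π i * B :=
        Finset.sum_le_sum (fun i _ => mul_le_mul_of_nonneg_left (hfB i) (hπ0 i))
      _ = B := by rw [← Finset.sum_mul, hπsum, one_mul]
  have hval_lb : ∀ (S : Finset (Fin n)) (π : Fin n → ℝ), (∀ i, 0 ≤ π i) →
      0 ≤ ∑ i ∈ S, π i * fw i :=
    fun S π hπ0 => Finset.sum_nonneg (fun i _ => mul_nonneg (hπ0 i) (hf0 i))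
  -- crude bounds on per-S suprema
  have hQmem_ub : ∀ S : Finset (Fin n), S.card = m → ∀ x ∈ QS S, x ≤ c + B := by
    intro S hScard x hx
    obtain ⟨π, hπ0, hπsupp, hπsum, hπcap, rfl⟩ := hx
    have hD : 0 ≤ ∑ i ∈ S, π i * Real.log (π i * m) :=
      entropy_nonneg m hm S hScard π hπ0 hπsum
    have h1 := hval_ub S π hπ0 hπsum
    rw [hobj S π hπsum]
    have h2 : 0 ≤ ν * ∑ i ∈ S, π i * Real.log (π i * m) := mul_nonneg hν.le hD
    linarith
  have hQbdd : ∀ S : Finset (Fin n), S.card = m → BddAbove (QS S) :=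
    fun S h => ⟨c + B, fun x hx => hQmem_ub S h x hx⟩
  have hQlb_c : ∀ S : Finset (Fin n), S.card = m → c ≤ sSup (QS S) := by
    intro S hScard
    set π0 : Fin n → ℝ := fun i => if i ∈ S then 1/(m:ℝ) else 0 with hπ0def
    have hπ00 : ∀ i, 0 ≤ π0 i := by
      intro i; simp only [hπ0def]; by_cases h : i ∈ S
      · rw [if_pos h]; positivity
      · rw [if_neg h]
    have hπ0sum : ∑ i ∈ S, π0 i = 1 := by
      simp only [hπ0def]
      rw [Finset.sum_congr rfl (fun i hi => if_pos hi), Finset.sum_const, hScard,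
        nsmul_eq_mul]
      field_simp
    have hπ0cap : ∀ i, π0 i ≤ 1 / (θ * m) := by
      intro i; simp only [hπ0def]; by_cases h : i ∈ S
      · rw [if_pos h]
        apply one_div_le_one_div_of_le hs0
        nlinarith
      · rw [if_neg h]; positivity
    have hD0 : ∑ i ∈ S, π0 i * Real.log (π0 i * m) = 0 := by
      apply Finset.sum_eq_zero
      intro i hi
      simp only [hπ0def, if_pos hi]
      rw [one_div, inv_mul_cancel₀ (ne_of_gt hm0'), Real.log_one, mul_zero]
    have hmem : ((∑ i ∈ S, π0 i * (fw i + c)) - ν * ∑ i ∈ S, π0 i * Real.log (π0 i * m))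
        ∈ QS S := ⟨π0, hπ00, fun i hi => by simp only [hπ0def]; exact if_neg hi, hπ0sum, hπ0cap, rfl⟩
    have hge : c ≤ (∑ i ∈ S, π0 i * (fw i + c)) - ν * ∑ i ∈ S, π0 i * Real.log (π0 i * m) := by
      rw [hD0, mul_zero, sub_zero, hobj S π0 hπ0sum]
      linarith [hval_lb S π0 hπ00]
    exact le_trans hge (le_csSup (hQbdd S hScard) hmem)
  have hQub_cB : ∀ S : Finset (Fin n), S.card = m → sSup (QS S) ≤ c + B :=
    fun S h => Real.sSup_le (hQmem_ub S h) (by linarith)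
  -- crude bounds on the full supremum
  have hPFmem_ub : ∀ x ∈ PF, x ≤ c + B := by
    intro x hx
    obtain ⟨π, hπ0, hπsum, hπcap, rfl⟩ := hx
    rw [hobj Finset.univ π hπsum]
    linarith [hval_ub Finset.univ π hπ0 hπsum]
  have hPFbdd : BddAbove PF := ⟨c + B, fun x hx => hPFmem_ub x hx⟩
  have hG_lb_c : c ≤ sSup PF := by
    set π0 : Fin n → ℝ := fun _ => 1/(n:ℝ) with hπ0def
    have hπ0sum : ∑ i, π0 i = 1 := by
      simp only [hπ0def]
      rw [Finset.sum_const, Finset.card_univ, Fintype.card_fin, nsmul_eq_mul]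
      field_simp
    have hπ0cap : ∀ i, π0 i ≤ 1 / (θ * n) := by
      intro i; simp only [hπ0def]
      apply one_div_le_one_div_of_le hsN0
      nlinarith
    have hmem : (∑ i, π0 i * (fw i + c)) ∈ PF :=
      ⟨π0, fun i => by simp only [hπ0def]; positivity, hπ0sum, hπ0cap, rfl⟩
    have hge : c ≤ ∑ i, π0 i * (fw i + c) := by
      rw [hobj Finset.univ π0 hπ0sum]
      linarith [hval_lb Finset.univ π0 (fun i => by simp only [hπ0def]; positivity)]
    exact le_trans hge (le_csSup hPFbdd hmem)
  have hG_ub_cB : sSup PF ≤ c + B := Real.sSup_le hPFmem_ub (by linarith)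
  -- the filter set and its cardinality
  have hfiltcard : (Finset.univ.filter (fun S : Finset (Fin n) => S.card = m)).card
      = n.choose m := SS_card n m
  have hSmem : ∀ S ∈ Finset.univ.filter (fun S : Finset (Fin n) => S.card = m),
      S.card = m := fun S hS => (Finset.mem_filter.mp hS).2
  rcases le_or_gt (θ * (m:ℝ)) 1 with hcrude | hs1
  · -- crude case
    have hsum_ub : ∑ S ∈ Finset.univ.filter (fun S : Finset (Fin n) => S.card = m), sSup (QS S)
        ≤ (n.choose m : ℝ) * (c + B) := by
      calc ∑ S ∈ Finset.univ.filter (fun S : Finset (Fin n) => S.card = m), sSup (QS S)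
          ≤ ∑ _S ∈ Finset.univ.filter (fun S : Finset (Fin n) => S.card = m), (c + B) :=
            Finset.sum_le_sum (fun S hS => hQub_cB S (hSmem S hS))
        _ = (n.choose m : ℝ) * (c + B) := by
            rw [Finset.sum_const, hfiltcard, nsmul_eq_mul]
    have hsum_lb : (n.choose m : ℝ) * c
        ≤ ∑ S ∈ Finset.univ.filter (fun S : Finset (Fin n) => S.card = m), sSup (QS S) := by
      calc (n.choose m : ℝ) * c
          = ∑ _S ∈ Finset.univ.filter (fun S : Finset (Fin n) => S.card = m), c := by
            rw [Finset.sum_const, hfiltcard, nsmul_eq_mul]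
        _ ≤ _ := Finset.sum_le_sum (fun S hS => hQlb_c S (hSmem S hS))
    have hAVG_ub : (∑ S ∈ Finset.univ.filter (fun S : Finset (Fin n) => S.card = m),
        sSup (QS S)) / (n.choose m : ℝ) ≤ c + B := by
      rw [div_le_iff₀ hC0]; linarith
    have hAVG_lb : c ≤ (∑ S ∈ Finset.univ.filter (fun S : Finset (Fin n) => S.card = m),
        sSup (QS S)) / (n.choose m : ℝ) := by
      rw [le_div_iff₀ hC0]; linarith
    have hBB : B ≤ B / Real.sqrt (θ * m) := by
      rw [le_div_iff₀ hsqrt0]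
      have h1 : Real.sqrt (θ * (m:ℝ)) ≤ 1 := Real.sqrt_le_one.mpr hcrude
      nlinarith
    have h2ν : 0 ≤ 2 * ν * Real.log m := by positivity
    rw [abs_le]
    constructor <;> linarith
  · -- main case : θ * m > 1
    have hs1' : (1:ℝ) ≤ θ * m := hs1.le
    have hm2 : 2 ≤ m := by
      by_contra hcon
      push_neg at hcon
      have hmeq : m = 1 := by omega
      rw [hmeq] at hs1
      push_cast at hs1
      nlinarith
    -- integrability
    have hISint : ∀ S : Finset (Fin n),
        IntervalIntegrable (fun u => min (θ * (m:ℝ)) (Ncnt S fw u)) MeasureTheory.volume 0 B :=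
      fun S => (min_Ncnt_antitone S fw _).intervalIntegrable
    set If : ℝ := ∫ u in (0:ℝ)..B, min (θ * (n:ℝ)) (Ncnt Finset.univ fw u) with hIfdef
    set IS : Finset (Fin n) → ℝ := fun S => ∫ u in (0:ℝ)..B, min (θ * (m:ℝ)) (Ncnt S fw u)
      with hISdef
    have hIf0 : 0 ≤ If := by
      rw [hIfdef]
      apply intervalIntegral.integral_nonneg hB
      intro u _
      exact le_min hsN0.le (Ncnt_nonneg _ fw u)
    -- per-S two-sided bounds on the supremum
    have hQub_main : ∀ S : Finset (Fin n), S.card = m →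
        sSup (QS S) ≤ c + (1/(θ * (m:ℝ))) * IS S := by
      intro S hScard
      have hIS0 : 0 ≤ IS S := by
        simp only [hISdef]
        apply intervalIntegral.integral_nonneg hB
        intro u _
        exact le_min hs0.le (Ncnt_nonneg _ fw u)
      apply Real.sSup_le
      · rintro x ⟨π, hπ0, hπsupp, hπsum, hπcap, rfl⟩
        have hD : 0 ≤ ∑ i ∈ S, π i * Real.log (π i * m) :=
          entropy_nonneg m hm S hScard π hπ0 hπsum
        have hwd := weak_duality S fw B (θ * (m:ℝ)) hf0 hfB hB hs0 π hπ0 hπsum hπcap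
        rw [hobj S π hπsum]
        have h2 : 0 ≤ ν * ∑ i ∈ S, π i * Real.log (π i * m) := mul_nonneg hν.le hD
        have h3 : (∑ i ∈ S, π i * fw i) ≤ 1/(θ * (m:ℝ)) * IS S := by
          simp only [hISdef]; exact hwd
        linarith
      · have h4 : 0 ≤ (1/(θ * (m:ℝ))) * IS S := by positivity
        linarith
    have hQlb_main : ∀ S : Finset (Fin n), S.card = m →
        c + (1/(θ * (m:ℝ))) * IS S - ν * Real.log m ≤ sSup (QS S) := by
      intro S hScard
      have hSne : S.Nonempty := Finset.card_pos.mp (by omega)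
      obtain ⟨π, hπ0, hπsupp, hπsum, hπcap, hval⟩ :=
        strong_duality S hSne fw B (θ * (m:ℝ)) hf0 hfB hB hs0
          (by rw [hScard]; nlinarith)
      have hπ1 : ∀ i, π i ≤ 1 := by
        intro i
        refine le_trans (hπcap i) ?_
        rw [div_le_one hs0]
        exact hs1'
      have hD_ub := entropy_le_log m hm S π hπ0 hπ1 hπsum
      have hmem : ((∑ i ∈ S, π i * (fw i + c)) - ν * ∑ i ∈ S, π i * Real.log (π i * m))
          ∈ QS S := ⟨π, hπ0, hπsupp, hπsum, hπcap, rfl⟩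
      have hxle := le_csSup (hQbdd S hScard) hmem
      have hgood : c + (1/(θ * (m:ℝ))) * IS S - ν * Real.log m
          ≤ (∑ i ∈ S, π i * (fw i + c)) - ν * ∑ i ∈ S, π i * Real.log (π i * m) := by
        rw [hobj S π hπsum]
        have h5 : 1/(θ * (m:ℝ)) * IS S ≤ ∑ i ∈ S, π i * fw i := by
          simp only [hISdef]; exact hval
        have h6 : ν * ∑ i ∈ S, π i * Real.log (π i * m) ≤ ν * Real.log m :=
          mul_le_mul_of_nonneg_left hD_ub hν.le
        linarith
      linarith
    -- full-problem exact value
    have hunivne : (Finset.univ : Finset (Fin n)).Nonempty := ⟨⟨0, hn⟩, Finset.mem_univ _⟩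
    have hG_ub_main : sSup PF ≤ c + (1/(θ * (n:ℝ))) * If := by
      apply Real.sSup_le
      · rintro x ⟨π, hπ0, hπsum, hπcap, rfl⟩
        have hwd := weak_duality Finset.univ fw B (θ * (n:ℝ)) hf0 hfB hB hsN0 π hπ0 hπsum hπcap
        rw [hobj Finset.univ π hπsum]
        have h3 : (∑ i, π i * fw i) ≤ 1/(θ * (n:ℝ)) * If := by
          rw [hIfdef]; exact hwd
        linarith
      · have h4 : 0 ≤ (1/(θ * (n:ℝ))) * If := by positivity
        linarith
    have hG_lb_main : c + (1/(θ * (n:ℝ))) * If ≤ sSup PF := by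
      obtain ⟨π, hπ0, hπsupp, hπsum, hπcap, hval⟩ :=
        strong_duality Finset.univ hunivne fw B (θ * (n:ℝ)) hf0 hfB hB hsN0
          (by rw [Finset.card_univ, Fintype.card_fin]; nlinarith)
      have hmem : (∑ i, π i * (fw i + c)) ∈ PF := ⟨π, hπ0, hπsum, hπcap, rfl⟩
      have h5 : 1/(θ * (n:ℝ)) * If ≤ ∑ i, π i * fw i := by rw [hIfdef]; exact hval
      have h6 := le_csSup hPFbdd hmem
      rw [hobj Finset.univ π hπsum] at h6
      linarith
    -- pointwise concentration / Jensen bounds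
    have hCmn0 : (0:ℝ) ≤ (n.choose m : ℝ) * ((m:ℝ)/(n:ℝ)) := by positivity
    have hC1C : ((n-1).choose (m-1) : ℝ) = (n.choose m : ℝ) * ((m:ℝ)/(n:ℝ)) := by
      have h := choose_id1 hm hmn
      field_simp
      linarith
    have hptwise_ub : ∀ u : ℝ,
        (∑ S ∈ Finset.univ.filter (fun S : Finset (Fin n) => S.card = m),
          min (θ * (m:ℝ)) (Ncnt S fw u))
        ≤ ((n.choose m : ℝ) * ((m:ℝ)/(n:ℝ))) * min (θ * (n:ℝ)) (Ncnt Finset.univ fw u) := by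
      intro u
      rw [mul_min _ _ _ hCmn0]
      apply le_min
      · calc ∑ S ∈ Finset.univ.filter (fun S : Finset (Fin n) => S.card = m),
            min (θ * (m:ℝ)) (Ncnt S fw u)
            ≤ ∑ _S ∈ Finset.univ.filter (fun S : Finset (Fin n) => S.card = m), (θ * (m:ℝ)) :=
              Finset.sum_le_sum (fun S _ => min_le_left _ _)
          _ = (n.choose m : ℝ) * (θ * (m:ℝ)) := by
              rw [Finset.sum_const, hfiltcard, nsmul_eq_mul]
          _ = (n.choose m : ℝ) * ((m:ℝ)/(n:ℝ)) * (θ * (n:ℝ)) := by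
              field_simp
      · calc ∑ S ∈ Finset.univ.filter (fun S : Finset (Fin n) => S.card = m),
            min (θ * (m:ℝ)) (Ncnt S fw u)
            ≤ ∑ S ∈ Finset.univ.filter (fun S : Finset (Fin n) => S.card = m), Ncnt S fw u :=
              Finset.sum_le_sum (fun S _ => min_le_right _ _)
          _ = ((n-1).choose (m-1) : ℝ) * Ncnt Finset.univ fw u := by
              simp only [Ncnt]
              exact sum_first hmn hm (fun i => if u < fw i then (1:ℝ) else 0)
          _ = (n.choose m : ℝ) * ((m:ℝ)/(n:ℝ)) * Ncnt Finset.univ fw u := by rw [hC1C]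
    have hptwise_lb : ∀ u : ℝ,
        (n.choose m : ℝ) * (((m:ℝ)/(n:ℝ)) * min (θ * (n:ℝ)) (Ncnt Finset.univ fw u)
            - Real.sqrt (θ * (m:ℝ)))
        ≤ ∑ S ∈ Finset.univ.filter (fun S : Finset (Fin n) => S.card = m),
            min (θ * (m:ℝ)) (Ncnt S fw u) := by
      intro u
      have hχ : ∀ i, (if u < fw i then (1:ℝ) else 0) = 0 ∨ (if u < fw i then (1:ℝ) else 0) = 1 := by
        intro i; by_cases h : u < fw i <;> simp [h]
      have hconc := conc hm2 hmn (θ * (m:ℝ)) hs1' (fun i => if u < fw i then (1:ℝ) else 0) hχ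
      have hmineq : min (θ * (m:ℝ)) (((m:ℝ)/(n:ℝ)) * Ncnt Finset.univ fw u)
          = ((m:ℝ)/(n:ℝ)) * min (θ * (n:ℝ)) (Ncnt Finset.univ fw u) := by
        rw [mul_min _ _ _ (by positivity : (0:ℝ) ≤ (m:ℝ)/(n:ℝ))]
        congr 1
        field_simp
      rw [← hmineq]
      simp only [Ncnt]
      exact hconc
    -- integral comparison
    have hsumanti : Antitone (fun u => ∑ S ∈ Finset.univ.filter
        (fun S : Finset (Fin n) => S.card = m), min (θ * (m:ℝ)) (Ncnt S fw u)) := by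
      intro u v huv
      exact Finset.sum_le_sum (fun S _ => min_Ncnt_antitone S fw _ huv)
    have hswap : ∑ S ∈ Finset.univ.filter (fun S : Finset (Fin n) => S.card = m), IS S
        = ∫ u in (0:ℝ)..B, (∑ S ∈ Finset.univ.filter (fun S : Finset (Fin n) => S.card = m),
            min (θ * (m:ℝ)) (Ncnt S fw u)) := by
      simp only [hISdef]
      exact (intervalIntegral.integral_finset_sum (fun S _ => hISint S)).symm
    have hup_int : ∑ S ∈ Finset.univ.filter (fun S : Finset (Fin n) => S.card = m), IS S
        ≤ (n.choose m : ℝ) * ((m:ℝ)/(n:ℝ)) * If := by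
      rw [hswap]
      have hanti1 : Antitone (fun u => ((n.choose m : ℝ) * ((m:ℝ)/(n:ℝ)))
          * min (θ * (n:ℝ)) (Ncnt Finset.univ fw u)) := fun u v huv =>
        mul_le_mul_of_nonneg_left (min_Ncnt_antitone _ fw _ huv) hCmn0
      have hi1 : IntervalIntegrable _ MeasureTheory.volume (0:ℝ) B :=
        hsumanti.intervalIntegrable
      have hi2 : IntervalIntegrable _ MeasureTheory.volume (0:ℝ) B :=
        hanti1.intervalIntegrable
      have h1 := intervalIntegral.integral_mono_on hB hi1 hi2 (fun u _ => hptwise_ub u)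
      rw [intervalIntegral.integral_const_mul, ← hIfdef] at h1
      linarith
    have hlow_int : (n.choose m : ℝ) * (((m:ℝ)/(n:ℝ)) * If - Real.sqrt (θ * (m:ℝ)) * B)
        ≤ ∑ S ∈ Finset.univ.filter (fun S : Finset (Fin n) => S.card = m), IS S := by
      rw [hswap]
      have hanti2 : Antitone (fun u => (n.choose m : ℝ)
          * (((m:ℝ)/(n:ℝ)) * min (θ * (n:ℝ)) (Ncnt Finset.univ fw u)
            - Real.sqrt (θ * (m:ℝ)))) := by
        intro u v huv
        have h0 := min_Ncnt_antitone Finset.univ fw (θ * (n:ℝ)) huv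
        apply mul_le_mul_of_nonneg_left _ hC0.le
        have : ((m:ℝ)/(n:ℝ)) * min (θ * (n:ℝ)) (Ncnt Finset.univ fw v)
            ≤ ((m:ℝ)/(n:ℝ)) * min (θ * (n:ℝ)) (Ncnt Finset.univ fw u) :=
          mul_le_mul_of_nonneg_left h0 (by positivity)
        linarith
      have hi1 : IntervalIntegrable _ MeasureTheory.volume (0:ℝ) B :=
        hanti2.intervalIntegrable
      have hi2 : IntervalIntegrable _ MeasureTheory.volume (0:ℝ) B :=
        hsumanti.intervalIntegrable
      have h1 := intervalIntegral.integral_mono_on hB hi1 hi2 (fun u _ => hptwise_lb u)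
      have hintg : IntervalIntegrable (fun u => ((m:ℝ)/(n:ℝ))
          * min (θ * (n:ℝ)) (Ncnt Finset.univ fw u)) MeasureTheory.volume 0 B := by
        apply Antitone.intervalIntegrable
        intro u v huv
        exact mul_le_mul_of_nonneg_left (min_Ncnt_antitone _ fw _ huv) (by positivity)
      have h2 : ∫ u in (0:ℝ)..B, ((n.choose m : ℝ)
          * (((m:ℝ)/(n:ℝ)) * min (θ * (n:ℝ)) (Ncnt Finset.univ fw u)
            - Real.sqrt (θ * (m:ℝ))))
          = (n.choose m : ℝ) * (((m:ℝ)/(n:ℝ)) * If - Real.sqrt (θ * (m:ℝ)) * B) := by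
        rw [intervalIntegral.integral_const_mul]
        congr 1
        rw [intervalIntegral.integral_sub hintg (intervalIntegrable_const),
          intervalIntegral.integral_const_mul, ← hIfdef, intervalIntegral.integral_const,
          smul_eq_mul, sub_zero]
        ring
      linarith
    -- combine per-S bounds over the sum
    have hsum_ub2 : (∑ S ∈ Finset.univ.filter (fun S : Finset (Fin n) => S.card = m),
          sSup (QS S))
        ≤ (n.choose m : ℝ) * c + (1/(θ * (m:ℝ)))
          * ∑ S ∈ Finset.univ.filter (fun S : Finset (Fin n) => S.card = m), IS S := by
      calc (∑ S ∈ Finset.univ.filter (fun S : Finset (Fin n) => S.card = m), sSup (QS S))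
          ≤ ∑ S ∈ Finset.univ.filter (fun S : Finset (Fin n) => S.card = m),
              (c + (1/(θ * (m:ℝ))) * IS S) :=
            Finset.sum_le_sum (fun S hS => hQub_main S (hSmem S hS))
        _ = (n.choose m : ℝ) * c + (1/(θ * (m:ℝ)))
            * ∑ S ∈ Finset.univ.filter (fun S : Finset (Fin n) => S.card = m), IS S := by
            rw [Finset.sum_add_distrib, Finset.sum_const, hfiltcard, nsmul_eq_mul,
              ← Finset.mul_sum]
    have hsum_lb2 : (n.choose m : ℝ) * c + (1/(θ * (m:ℝ)))
          * (∑ S ∈ Finset.univ.filter (fun S : Finset (Fin n) => S.card = m), IS S)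
          - (n.choose m : ℝ) * (ν * Real.log m)
        ≤ ∑ S ∈ Finset.univ.filter (fun S : Finset (Fin n) => S.card = m), sSup (QS S) := by
      have := Finset.sum_le_sum (fun S hS => hQlb_main S (hSmem S hS))
      calc (n.choose m : ℝ) * c + (1/(θ * (m:ℝ)))
            * (∑ S ∈ Finset.univ.filter (fun S : Finset (Fin n) => S.card = m), IS S)
            - (n.choose m : ℝ) * (ν * Real.log m)
          = ∑ S ∈ Finset.univ.filter (fun S : Finset (Fin n) => S.card = m),
              (c + (1/(θ * (m:ℝ))) * IS S - ν * Real.log m) := by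
            rw [Finset.sum_sub_distrib, Finset.sum_add_distrib, Finset.sum_const, hfiltcard,
              nsmul_eq_mul, ← Finset.mul_sum, Finset.sum_const, hfiltcard, nsmul_eq_mul]
        _ ≤ _ := this
    -- algebraic identities
    have hid_a : (1/(θ * (m:ℝ))) * ((n.choose m : ℝ) * ((m:ℝ)/(n:ℝ)) * If)
        = (n.choose m : ℝ) * ((1/(θ * (n:ℝ))) * If) := by
      field_simp
    have hsqid : Real.sqrt (θ * (m:ℝ)) * Real.sqrt (θ * (m:ℝ)) = θ * (m:ℝ) :=
      Real.mul_self_sqrt hs0.le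
    have h7 : (1/(θ * (m:ℝ))) * Real.sqrt (θ * (m:ℝ)) = 1/Real.sqrt (θ * (m:ℝ)) := by
      rw [← hsqid]
      field_simp
      rw [Real.sqrt_sq hsqrt0.le]
    have hid_b : (1/(θ * (m:ℝ))) * ((n.choose m : ℝ) * (Real.sqrt (θ * (m:ℝ)) * B))
        = (n.choose m : ℝ) * (B / Real.sqrt (θ * (m:ℝ))) := by
      calc (1/(θ * (m:ℝ))) * ((n.choose m : ℝ) * (Real.sqrt (θ * (m:ℝ)) * B))
          = (n.choose m : ℝ) * B * ((1/(θ * (m:ℝ))) * Real.sqrt (θ * (m:ℝ))) := by ring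
        _ = (n.choose m : ℝ) * B * (1/Real.sqrt (θ * (m:ℝ))) := by rw [h7]
        _ = (n.choose m : ℝ) * (B / Real.sqrt (θ * (m:ℝ))) := by ring
    -- average bounds
    have hAVG_ub2 : (∑ S ∈ Finset.univ.filter (fun S : Finset (Fin n) => S.card = m),
          sSup (QS S)) / (n.choose m : ℝ) ≤ c + (1/(θ * (n:ℝ))) * If := by
      rw [div_le_iff₀ hC0]
      have t1 : (1/(θ * (m:ℝ)))
            * (∑ S ∈ Finset.univ.filter (fun S : Finset (Fin n) => S.card = m), IS S)
          ≤ (1/(θ * (m:ℝ))) * ((n.choose m : ℝ) * ((m:ℝ)/(n:ℝ)) * If) :=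
        mul_le_mul_of_nonneg_left hup_int (by positivity)
      rw [hid_a] at t1
      have expand : (c + 1/(θ * (n:ℝ)) * If) * (n.choose m : ℝ)
          = (n.choose m : ℝ) * c + (n.choose m : ℝ) * ((1/(θ * (n:ℝ))) * If) := by ring
      rw [expand]
      linarith
    have hAVG_lb2 : c + (1/(θ * (n:ℝ))) * If - B / Real.sqrt (θ * (m:ℝ)) - ν * Real.log m
        ≤ (∑ S ∈ Finset.univ.filter (fun S : Finset (Fin n) => S.card = m),
          sSup (QS S)) / (n.choose m : ℝ) := by
      rw [le_div_iff₀ hC0]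
      have t2 : (1/(θ * (m:ℝ)))
            * ((n.choose m : ℝ) * (((m:ℝ)/(n:ℝ)) * If - Real.sqrt (θ * (m:ℝ)) * B))
          ≤ (1/(θ * (m:ℝ)))
            * (∑ S ∈ Finset.univ.filter (fun S : Finset (Fin n) => S.card = m), IS S) :=
        mul_le_mul_of_nonneg_left hlow_int (by positivity)
      have expand2 : (1/(θ * (m:ℝ)))
            * ((n.choose m : ℝ) * (((m:ℝ)/(n:ℝ)) * If - Real.sqrt (θ * (m:ℝ)) * B))
          = (1/(θ * (m:ℝ))) * ((n.choose m : ℝ) * ((m:ℝ)/(n:ℝ)) * If)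
            - (1/(θ * (m:ℝ))) * ((n.choose m : ℝ) * (Real.sqrt (θ * (m:ℝ)) * B)) := by ring
      rw [expand2, hid_a, hid_b] at t2
      have expand3 : (c + 1/(θ * (n:ℝ)) * If - B / Real.sqrt (θ * (m:ℝ)) - ν * Real.log m)
            * (n.choose m : ℝ)
          = (n.choose m : ℝ) * c + (n.choose m : ℝ) * ((1/(θ * (n:ℝ))) * If)
            - (n.choose m : ℝ) * (B / Real.sqrt (θ * (m:ℝ)))
            - (n.choose m : ℝ) * (ν * Real.log m) := by ring
      rw [expand3]
      linarith
    -- finish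
    have hν2 : 0 ≤ ν * Real.log m := by positivity
    have hBs0 : 0 ≤ B / Real.sqrt (θ * (m:ℝ)) := by positivity
    rw [abs_le]
    constructor
    · linarith
    · linarith
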